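/- Let M be a 2×2 matrix with integer entries, determinant 1 and |tr M| > 2. The induced map of the torus 𝕋² = ℝ²/ℤ², x + ℤ² ↦ Mx + ℤ², is well defined, preserves the Haar probability measure on 𝕋², and is ergodic with respect to it. -/

import Mathlib

open MeasureTheory Matrix Set Function AddCircle Submodule ContinuousMap
open scoped ComplexConjugate ENNReal
noncomputable section

namespace CatMapAux


variable (A B : Matrix (Fin 2) (Fin 2) ℤ)

/-- Action of a 2×2 integer matrix on `ℤ × ℤ`. -/
def act (A : Matrix (Fin 2) (Fin 2) ℤ) (k : ℤ × ℤ) : ℤ × ℤ :=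
  (A 0 0 * k.1 + A 0 1 * k.2, A 1 0 * k.1 + A 1 1 * k.2)

lemma act_mul (k : ℤ × ℤ) : act (A * B) k = act A (act B k) := by
  simp only [act, Matrix.mul_apply, Fin.sum_univ_two, Prod.mk.injEq]
  constructor <;> ring

lemma act_one (k : ℤ × ℤ) : act 1 k = k := by
  simp [act, Matrix.one_apply]

lemma act_injective (h : A.det = 1) : Function.Injective (act A) := by
  have key : ∀ k, act (A.adjugate) (act A k) = k := by
    intro k
    rw [← act_mul, Matrix.adjugate_mul, h, one_smul, act_one]
  intro x y hxy
  rw [← key x, ← key y, hxy]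

lemma iterate_act (k : ℤ × ℤ) : ∀ n, (act A)^[n] k = act (A ^ n) k := by
  intro n
  induction n with
  | zero => simp [act_one]
  | succ n ih =>
    rw [Function.iterate_succ_apply', ih, ← act_mul, ← pow_succ']

lemma sq_eq (h : A.det = 1) : A ^ 2 = A.trace • A - 1 := by
  have hd := A.det_fin_two
  rw [h] at hd
  have ht : A.trace = A 0 0 + A 1 1 := Matrix.trace_fin_two A
  ext i j
  fin_cases i <;> fin_cases j <;>
    simp only [pow_two, Matrix.mul_apply, Fin.sum_univ_two, Matrix.sub_apply,
      Matrix.smul_apply, smul_eq_mul, Matrix.one_apply, ht] <;>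
    simp <;> nlinarith [hd]

lemma trace_pow_rec (h : A.det = 1) (n : ℕ) :
    (A ^ (n + 2)).trace = A.trace * (A ^ (n + 1)).trace - (A ^ n).trace := by
  have : A ^ (n + 2) = A.trace • (A ^ (n+1)) - A ^ n := by
    have : A ^ (n + 2) = A ^ n * A ^ 2 := pow_add A n 2
    rw [this, sq_eq A h, Matrix.mul_sub, Matrix.mul_one, Matrix.mul_smul, ← pow_succ]
  rw [this, Matrix.trace_sub, Matrix.trace_smul, smul_eq_mul]

lemma trace_pow_big (h : A.det = 1) (htr : 3 ≤ |A.trace|) :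
    ∀ n, 3 ≤ |(A ^ (n+1)).trace| ∧ |(A ^ (n+1)).trace| + 1 ≤ |(A ^ (n+2)).trace| := by
  intro n
  induction n with
  | zero =>
    refine ⟨by simpa using htr, ?_⟩
    have h2 : (A ^ (0 + 2)).trace = A.trace * (A ^ 1).trace - (A ^ 0).trace :=
      trace_pow_rec A h 0
    have h1 : Matrix.trace (1 : Matrix (Fin 2) (Fin 2) ℤ) = 2 := by
      simp [Matrix.trace_fin_two, Matrix.one_apply]
    simp only [pow_one, pow_zero, h1, zero_add] at h2 ⊢
    rw [h2]
    nlinarith [abs_sub_abs_le_abs_sub (A.trace * A.trace) 2, abs_mul A.trace A.trace,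
      abs_nonneg A.trace, (by norm_num : |(2:ℤ)| = 2)]
  | succ n ih =>
    obtain ⟨h1, h2⟩ := ih
    constructor
    · linarith
    · have hrec := trace_pow_rec A h (n + 1)
      rw [hrec]
      have habs := abs_sub_abs_le_abs_sub (A.trace * (A ^ (n+1+1)).trace) ((A ^ (n+1)).trace)
      rw [abs_mul] at habs
      nlinarith

lemma no_periodic (h : A.det = 1) (htr : 2 < |A.trace|) {k : ℤ × ℤ} (hk : k ≠ 0)
    {n : ℕ} (hn : 1 ≤ n) : act (A ^ n) k ≠ k := by
  intro hfix
  set B := A ^ n with hB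
  have hdetB : B.det = 1 := by rw [hB, Matrix.det_pow, h, one_pow]
  have htr3 : 3 ≤ |A.trace| := by omega
  have htrB : 3 ≤ |B.trace| := by
    obtain ⟨m, rfl⟩ := Nat.exists_eq_add_of_le hn
    have := (trace_pow_big A h htr3 m).1
    rwa [hB, add_comm 1 m]
  -- from the fixed point equation, det (B - 1) = 0, i.e. trace B = 2
  have h1 : B 0 0 * k.1 + B 0 1 * k.2 = k.1 := congrArg Prod.fst hfix
  have h2 : B 1 0 * k.1 + B 1 1 * k.2 = k.2 := congrArg Prod.snd hfix
  have hd : B.det = B 0 0 * B 1 1 - B 0 1 * B 1 0 := Matrix.det_fin_two B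
  have ht : B.trace = B 0 0 + B 1 1 := Matrix.trace_fin_two B
  have e1 : (B.det - B.trace + 1) * k.1 = 0 := by
    rw [hd, ht]; linear_combination (B 1 1 - 1) * h1 - B 0 1 * h2
  have e2 : (B.det - B.trace + 1) * k.2 = 0 := by
    rw [hd, ht]; linear_combination (B 0 0 - 1) * h2 - B 1 0 * h1
  have hk1 : k.1 ≠ 0 ∨ k.2 ≠ 0 := by
    by_contra hc
    push_neg at hc
    exact hk (Prod.ext hc.1 hc.2)
  have hzero : B.det - B.trace + 1 = 0 := by
    rcases hk1 with h | h
    · exact (mul_eq_zero.mp e1).resolve_right h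
    · exact (mul_eq_zero.mp e2).resolve_right h
  rw [hdetB] at hzero
  have : B.trace = 2 := by linarith
  rw [this] at htrB
  norm_num at htrB

lemma orbit_injective (h : A.det = 1) (htr : 2 < |A.trace|) {k : ℤ × ℤ} (hk : k ≠ 0) :
    Function.Injective fun n => (act A)^[n] k := by
  have key : ∀ m n : ℕ, m < n → (act A)^[m] k ≠ (act A)^[n] k := by
    intro m n hmn heq
    rw [iterate_act, iterate_act] at heq
    have hdec : A ^ n = A ^ m * A ^ (n - m) := by
      rw [← pow_add]; congr 1; omega
    rw [hdec, act_mul] at heq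
    have hdm : (A ^ m).det = 1 := by rw [Matrix.det_pow, h, one_pow]
    have := act_injective _ hdm heq.symm
    exact no_periodic A h htr hk (by omega) this
  intro m n hmn
  by_contra hne
  rcases lt_or_gt_of_ne hne with hlt | hlt
  · exact key m n hlt hmn
  · exact key n m hlt hmn.symm



example : Fact ((0:ℝ) < 1) := inferInstance
example : Measure.IsAddHaarMeasure (volume : Measure UnitAddCircle) := inferInstance


instance : Measure.IsAddHaarMeasure (volume : Measure (UnitAddCircle × UnitAddCircle)) := by
  rw [Measure.volume_eq_prod]; infer_instance

/-- The toral endomorphism induced by an integer matrix. -/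
def toral (A : Matrix (Fin 2) (Fin 2) ℤ) :
    (UnitAddCircle × UnitAddCircle) →+ (UnitAddCircle × UnitAddCircle) where
  toFun p := (A 0 0 • p.1 + A 0 1 • p.2, A 1 0 • p.1 + A 1 1 • p.2)
  map_zero' := by simp
  map_add' p q := by
    simp only [Prod.fst_add, Prod.snd_add, smul_add, Prod.mk_add_mk, Prod.mk.injEq]
    constructor <;> abel

lemma toral_apply (A : Matrix (Fin 2) (Fin 2) ℤ) (p : UnitAddCircle × UnitAddCircle) :
    toral A p = (A 0 0 • p.1 + A 0 1 • p.2, A 1 0 • p.1 + A 1 1 • p.2) := rfl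

lemma toral_mul (A B : Matrix (Fin 2) (Fin 2) ℤ) (p : UnitAddCircle × UnitAddCircle) :
    toral (A * B) p = toral A (toral B p) := by
  simp only [toral_apply, Matrix.mul_apply, Fin.sum_univ_two, smul_add, add_smul,
    mul_smul, Prod.mk.injEq]
  constructor <;> abel

lemma toral_one (p : UnitAddCircle × UnitAddCircle) : toral 1 p = p := by
  simp [toral_apply, Matrix.one_apply]

lemma toral_continuous (A : Matrix (Fin 2) (Fin 2) ℤ) : Continuous (toral A) := by
  refine Continuous.prodMk ?_ ?_ <;>
    exact ((continuous_zsmul _).comp continuous_fst).add ((continuous_zsmul _).comp continuous_snd)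

lemma toral_surjective (A : Matrix (Fin 2) (Fin 2) ℤ) (h : A.det = 1) :
    Function.Surjective (toral A) := by
  intro p
  refine ⟨toral A.adjugate p, ?_⟩
  rw [← toral_mul, Matrix.mul_adjugate, h, one_smul, toral_one]

lemma toral_measurePreserving (A : Matrix (Fin 2) (Fin 2) ℤ) (h : A.det = 1) :
    MeasurePreserving (toral A) volume volume := by
  rw [Measure.volume_eq_prod]
  exact AddMonoidHom.measurePreserving (toral_continuous A) (toral_surjective A h) rfl

lemma toral_coe (A : Matrix (Fin 2) (Fin 2) ℤ) (r s : ℝ) :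
    toral A ((r : UnitAddCircle), (s : UnitAddCircle)) =
      (((A 0 0 * r + A 0 1 * s : ℝ) : UnitAddCircle),
       ((A 1 0 * r + A 1 1 * s : ℝ) : UnitAddCircle)) := by
  simp only [toral_apply, ← AddCircle.coe_add, Prod.mk.injEq]
  constructor <;>
  · rw [← QuotientAddGroup.mk_zsmul, ← QuotientAddGroup.mk_zsmul, ← QuotientAddGroup.mk_add]
    norm_num [zsmul_eq_mul]



lemma vol_circle : (volume : Measure UnitAddCircle) = haarAddCircle := by
  rw [AddCircle.volume_eq_smul_haarAddCircle]; simp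

instance : IsProbabilityMeasure (volume : Measure UnitAddCircle) := by
  rw [vol_circle]; infer_instance

instance : IsProbabilityMeasure (volume : Measure (UnitAddCircle × UnitAddCircle)) := by
  rw [Measure.volume_eq_prod]; infer_instance

/-- Fourier monomials on the 2-torus. -/
def eC (k : ℤ × ℤ) : C(UnitAddCircle × UnitAddCircle, ℂ) :=
  ((fourier k.1).comp ⟨Prod.fst, continuous_fst⟩) * ((fourier k.2).comp ⟨Prod.snd, continuous_snd⟩)

lemma eC_apply (k : ℤ × ℤ) (p : UnitAddCircle × UnitAddCircle) :
    eC k p = fourier k.1 p.1 * fourier k.2 p.2 := rfl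

lemma eC_zero : eC 0 = 1 := by
  ext p
  simp [eC_apply, fourier_zero]

lemma eC_add (j k : ℤ × ℤ) : eC (j + k) = eC j * eC k := by
  ext p
  simp only [eC_apply, Prod.fst_add, Prod.snd_add, fourier_add, ContinuousMap.mul_apply, eC_apply]
  ring

lemma eC_neg (k : ℤ × ℤ) : eC (-k) = star (eC k) := by
  ext p
  simp [eC_apply, Prod.fst_neg, Prod.snd_neg, fourier_neg]

/-- The star subalgebra generated by the torus Fourier monomials. -/
def torusSubalgebra : StarSubalgebra ℂ C(UnitAddCircle × UnitAddCircle, ℂ) where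
  toSubalgebra := Algebra.adjoin ℂ (range eC)
  star_mem' := by
    show Algebra.adjoin ℂ (range eC) ≤ star (Algebra.adjoin ℂ (range eC))
    refine Algebra.adjoin_le ?_
    rintro - ⟨k, rfl⟩
    exact Algebra.subset_adjoin ⟨-k, eC_neg k⟩

lemma torusSubalgebra_coe :
    Subalgebra.toSubmodule torusSubalgebra.toSubalgebra = span ℂ (range eC) := by
  apply Algebra.adjoin_eq_span_of_subset
  refine Subset.trans ?_ Submodule.subset_span
  intro x hx
  refine Submonoid.closure_induction (fun _ => id) ⟨0, eC_zero⟩ ?_ hx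
  rintro - - - - ⟨m, rfl⟩ ⟨n, rfl⟩
  exact ⟨m + n, eC_add m n⟩

lemma torusSubalgebra_separatesPoints : torusSubalgebra.SeparatesPoints := by
  intro x y hxy
  obtain h | h : x.1 ≠ y.1 ∨ x.2 ≠ y.2 := by
    by_contra hc
    push_neg at hc
    exact hxy (Prod.ext hc.1 hc.2)
  · refine ⟨_, ⟨eC (1, 0), Algebra.subset_adjoin ⟨(1, 0), rfl⟩, rfl⟩, ?_⟩
    simp only [eC_apply, fourier_one, fourier_zero, mul_one]
    intro hc
    exact h (injective_toCircle one_ne_zero (Subtype.coe_inj.mp hc))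
  · refine ⟨_, ⟨eC (0, 1), Algebra.subset_adjoin ⟨(0, 1), rfl⟩, rfl⟩, ?_⟩
    simp only [eC_apply, fourier_one, fourier_zero, one_mul]
    intro hc
    exact h (injective_toCircle one_ne_zero (Subtype.coe_inj.mp hc))

lemma span_eC_closure_eq_top :
    (span ℂ (range eC)).topologicalClosure = ⊤ := by
  rw [← torusSubalgebra_coe]
  exact congr_arg (Subalgebra.toSubmodule <| StarSubalgebra.toSubalgebra ·)
    (ContinuousMap.starSubalgebra_topologicalClosure_eq_top_of_separatesPoints torusSubalgebra
      torusSubalgebra_separatesPoints)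

/-- Torus Fourier monomials as elements of L². -/
def eL (k : ℤ × ℤ) : Lp ℂ 2 (volume : Measure (UnitAddCircle × UnitAddCircle)) :=
  ContinuousMap.toLp (E := ℂ) 2 volume ℂ (eC k)

lemma span_eL_closure_eq_top :
    (span ℂ (range eL)).topologicalClosure = ⊤ := by
  convert
    (ContinuousMap.toLp_denseRange ℂ (volume : Measure (UnitAddCircle × UnitAddCircle)) ℂ
      (by norm_num : (2:ℝ≥0∞) ≠ ∞)).topologicalClosure_map_submodule span_eC_closure_eq_top
  case e'_3 => rfl
  erw [map_span, range_comp]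
  simp only [ContinuousLinearMap.coe_coe]

lemma orthonormal_eL : Orthonormal ℂ eL := by
  rw [orthonormal_iff_ite]
  intro j k
  rw [eL, eL, ContinuousMap.inner_toLp volume (eC j) (eC k)]
  simp_rw [mul_comm (eC k _)]
  have : ∀ x : UnitAddCircle × UnitAddCircle,
      conj (eC j x) * eC k x =
        (fun y => conj (fourier j.1 y) * fourier k.1 y) x.1 *
        (fun y => conj (fourier j.2 y) * fourier k.2 y) x.2 := by
    intro x
    simp only [eC_apply, _root_.map_mul]
    ring
  rw [integral_congr_ae (Filter.Eventually.of_forall this), Measure.volume_eq_prod]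
  rw [MeasureTheory.integral_prod_mul (μ := (volume : Measure UnitAddCircle))
    (ν := (volume : Measure UnitAddCircle))
    (f := fun y => conj (fourier j.1 y) * fourier k.1 y)
    (g := fun y => conj (fourier j.2 y) * fourier k.2 y)]
  have key : ∀ (m n : ℤ),
      (∫ y : UnitAddCircle, conj (fourier m y) * fourier n y) = if m = n then 1 else 0 := by
    intro m n
    have := orthonormal_iff_ite.mp (orthonormal_fourier (T := 1)) m n
    rw [ContinuousMap.inner_toLp haarAddCircle (fourier m) (fourier n)] at this
    rw [← vol_circle] at this
    simpa only [mul_comm] using this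
  rw [key, key]
  by_cases h1 : j.1 = k.1 <;> by_cases h2 : j.2 = k.2 <;> simp [Prod.ext_iff, h1, h2]

/-- The Hilbert basis of L²(𝕋²) given by Fourier monomials. -/
def torusBasis : HilbertBasis (ℤ × ℤ) ℂ
    (Lp ℂ 2 (volume : Measure (UnitAddCircle × UnitAddCircle))) :=
  HilbertBasis.mk orthonormal_eL (by rw [span_eL_closure_eq_top])

lemma torusBasis_apply (k : ℤ × ℤ) : torusBasis k = eL k := congrFun (HilbertBasis.coe_mk _ _) k


lemma fourier_add_arg {T : ℝ} {n : ℤ} (x y : AddCircle T) :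
    fourier n (x + y) = fourier n x * fourier n y := by
  simp only [fourier_apply, smul_add, AddCircle.toCircle_add, Circle.coe_mul]

lemma fourier_smul_arg {T : ℝ} {n m : ℤ} (x : AddCircle T) :
    fourier n (m • x) = fourier (n * m) x := by
  rw [fourier_apply, fourier_apply, smul_smul]

lemma eC_comp_toral (M : Matrix (Fin 2) (Fin 2) ℤ) (k : ℤ × ℤ)
    (p : UnitAddCircle × UnitAddCircle) :
    eC k (toral M p) = eC (act Mᵀ k) p := by
  simp only [eC_apply, toral_apply, act, Matrix.transpose_apply]
  rw [fourier_add_arg, fourier_add_arg, fourier_smul_arg, fourier_smul_arg,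
    fourier_smul_arg, fourier_smul_arg, fourier_add, fourier_add,
    mul_comm k.1 (M 0 0), mul_comm k.1 (M 0 1), mul_comm k.2 (M 1 0), mul_comm k.2 (M 1 1)]
  ring

lemma toral_ergodic (M : Matrix (Fin 2) (Fin 2) ℤ) (hdet : M.det = 1)
    (htr : 2 < |M.trace|) :
    Ergodic (toral M) (volume : Measure (UnitAddCircle × UnitAddCircle)) := by
  refine ⟨toral_measurePreserving M hdet, ⟨fun s hs hst => ?_⟩⟩
  rw [Filter.eventuallyConst_set']
  set μ := (volume : Measure (UnitAddCircle × UnitAddCircle)) with hμ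
  have hind : Measurable (s.indicator fun _ => (1:ℂ)) := measurable_const.indicator hs
  set g : Lp ℂ 2 μ := indicatorConstLp 2 hs (measure_ne_top μ s) (1:ℂ) with hg
  set c : ℤ × ℤ → ℂ := fun k => torusBasis.repr g k with hcdef
  have hmem : ∀ x, toral M x ∈ s ↔ x ∈ s := fun x => Set.ext_iff.mp hst x
  have hindT : ∀ x, s.indicator (fun _ => (1:ℂ)) (toral M x)
      = s.indicator (fun _ => (1:ℂ)) x := by
    intro x
    by_cases hx : x ∈ s
    · rw [Set.indicator_of_mem hx, Set.indicator_of_mem ((hmem x).mpr hx)]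
    · rw [Set.indicator_of_notMem hx, Set.indicator_of_notMem (fun hc => hx ((hmem x).mp hc))]
  have hc_int : ∀ k, c k = ∫ x, conj (eC k x) * s.indicator (fun _ => (1:ℂ)) x ∂μ := by
    intro k
    show (torusBasis.repr g) k = _
    rw [HilbertBasis.repr_apply_apply, torusBasis_apply, eL, MeasureTheory.L2.inner_def]
    apply integral_congr_ae
    filter_upwards [ContinuousMap.coeFn_toLp (p := 2) (𝕜 := ℂ) μ (eC k),
      indicatorConstLp_coeFn (p := (2:ℝ≥0∞)) (hs := hs) (hμs := measure_ne_top μ s)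
        (c := (1:ℂ))] with x h1 h2
    rw [RCLike.inner_apply, h1, h2, mul_comm]
  have hMP := toral_measurePreserving M hdet
  have hinv : ∀ k, c (act Mᵀ k) = c k := by
    intro k
    rw [hc_int, hc_int]
    have hmeas : AEStronglyMeasurable
        (fun x => conj (eC k x) * s.indicator (fun _ => (1:ℂ)) x) μ :=
      ((Complex.continuous_conj.comp (eC k).continuous).aestronglyMeasurable.mul
        hind.aestronglyMeasurable)
    have step1 : ∫ x, conj (eC (act Mᵀ k) x) * s.indicator (fun _ => (1:ℂ)) x ∂μ
        = ∫ x, conj (eC k (toral M x)) * s.indicator (fun _ => (1:ℂ)) (toral M x) ∂μ := by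
      apply integral_congr_ae
      apply Filter.Eventually.of_forall
      intro x
      simp only [eC_comp_toral, hindT]
    have hmeas' : AEStronglyMeasurable
        (fun x => conj (eC k x) * s.indicator (fun _ => (1:ℂ)) x) (Measure.map (toral M) μ) := by
      rw [hMP.map_eq]; exact hmeas
    rw [step1, ← MeasureTheory.integral_map hMP.measurable.aemeasurable hmeas', hMP.map_eq]
  have horb : ∀ k : ℤ × ℤ, k ≠ 0 → c k = 0 := by
    intro k hk
    by_contra hck
    have hdetT : (Mᵀ).det = 1 := by rw [Matrix.det_transpose, hdet]
    have htrT : 2 < |(Mᵀ).trace| := by rw [Matrix.trace_transpose]; exact htr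
    have hinj : Function.Injective fun n => (act Mᵀ)^[n] k :=
      orbit_injective Mᵀ hdetT htrT hk
    have hval : ∀ n, c ((act Mᵀ)^[n] k) = c k := by
      intro n
      induction n with
      | zero => rfl
      | succ n ih => rw [Function.iterate_succ_apply', hinv, ih]
    have hsum : Summable fun i : ℤ × ℤ => ‖torusBasis.repr g i‖ ^ (2:ℝ≥0∞).toReal :=
      (lp.memℓp (torusBasis.repr g)).summable (by norm_num)
    have hpos : (0:ℝ) < ‖c k‖ ^ (2:ℝ≥0∞).toReal := by
      have : 0 < ‖c k‖ := norm_pos_iff.mpr hck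
      positivity
    have hev := hsum.tendsto_cofinite_zero.eventually_lt_const hpos
    rw [Filter.eventually_cofinite] at hev
    refine Set.infinite_range_of_injective hinj (hev.subset ?_)
    rintro - ⟨n, rfl⟩
    simp only [Set.mem_setOf_eq, not_lt]
    have : torusBasis.repr g ((act Mᵀ)^[n] k) = c k := hval n
    rw [this]
  have hg_eq : g = c 0 • torusBasis 0 := by
    apply torusBasis.repr.injective
    apply lp.ext
    funext i
    rw [_root_.map_smul, HilbertBasis.repr_self, lp.coeFn_smul]
    by_cases hi : i = 0
    · subst hi
      simp only [Pi.smul_apply, lp.single_apply_self, smul_eq_mul, mul_one]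
      rfl
    · have h1 : lp.single (E := fun _ : ℤ × ℤ => ℂ) 2 0 (1:ℂ) i = 0 :=
        lp.single_apply_ne _ _ _ hi
      have h2 : torusBasis.repr g i = 0 := horb i hi
      rw [Pi.smul_apply, h1, smul_zero]
      exact h2
  have hbase : ⇑(torusBasis (0 : ℤ × ℤ)) =ᵐ[μ] fun _ => (1:ℂ) := by
    rw [torusBasis_apply]
    filter_upwards [ContinuousMap.coeFn_toLp (p := 2) (𝕜 := ℂ) μ (eC 0)] with x hx
    have h1 : eC 0 x = 1 := by rw [eC_zero]; rfl
    exact hx.trans h1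
  have hae : (s.indicator fun _ => (1:ℂ)) =ᵐ[μ] fun _ => c 0 := by
    have h1 : ⇑g =ᵐ[μ] s.indicator fun _ => (1:ℂ) := indicatorConstLp_coeFn
    have h2 : ⇑g =ᵐ[μ] fun _ => c 0 := by
      rw [hg_eq]
      filter_upwards [Lp.coeFn_smul (c 0) (torusBasis (0 : ℤ × ℤ)), hbase] with x hx1 hx2
      rw [hx1, Pi.smul_apply, hx2, smul_eq_mul, mul_one]
    exact h1.symm.trans h2
  by_cases hc1 : c 0 = 1
  · right
    rw [Filter.eventuallyEq_univ]
    show ∀ᵐ x ∂μ, x ∈ s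
    filter_upwards [hae] with x hx
    by_contra hxs
    rw [Set.indicator_of_notMem hxs, hc1] at hx
    exact one_ne_zero hx.symm
  · left
    rw [Filter.eventuallyEq_empty]
    filter_upwards [hae] with x hx
    intro hxs
    rw [Set.indicator_of_mem hxs] at hx
    exact hc1 hx.symm

lemma toral_prop (M : Matrix (Fin 2) (Fin 2) ℤ) (x : Fin 2 → ℝ) :
    toral M (↑(x 0), ↑(x 1)) =
      (↑(Matrix.mulVec (M.map ((↑) : ℤ → ℝ)) x 0), ↑(Matrix.mulVec (M.map ((↑) : ℤ → ℝ)) x 1)) := by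
  rw [toral_coe]
  have h0 : Matrix.mulVec (M.map ((↑) : ℤ → ℝ)) x 0 = (M 0 0 : ℝ) * x 0 + (M 0 1 : ℝ) * x 1 := by
    simp [Matrix.mulVec, dotProduct, Fin.sum_univ_two, Matrix.map_apply]
  have h1 : Matrix.mulVec (M.map ((↑) : ℤ → ℝ)) x 1 = (M 1 0 : ℝ) * x 0 + (M 1 1 : ℝ) * x 1 := by
    simp [Matrix.mulVec, dotProduct, Fin.sum_univ_two, Matrix.map_apply]
  rw [h0, h1]

end CatMapAux

open CatMapAux in
/-- Let `M` be a `2×2` integer matrix with determinant `1` and `|tr M| > 2`.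
The induced map of the torus `𝕋² = ℝ²/ℤ²`, `x + ℤ² ↦ M x + ℤ²`, is well defined (i.e. there is
a unique map of the torus intertwining the quotient projection with `x ↦ M x`), preserves the
Haar probability measure on `𝕋²`, and is ergodic with respect to it. -/
theorem cat_map_ergodic
    (M : Matrix (Fin 2) (Fin 2) ℤ) (hdet : M.det = 1) (htr : |M.trace| > 2) :
    IsProbabilityMeasure (volume : Measure (UnitAddCircle × UnitAddCircle)) ∧
    ∃! T : UnitAddCircle × UnitAddCircle → UnitAddCircle × UnitAddCircle,
      (∀ x : Fin 2 → ℝ,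
        T (↑(x 0), ↑(x 1)) =
          (↑(Matrix.mulVec (M.map ((↑) : ℤ → ℝ)) x 0), ↑(Matrix.mulVec (M.map ((↑) : ℤ → ℝ)) x 1))) ∧
      Ergodic T (volume : Measure (UnitAddCircle × UnitAddCircle)) := by
  refine ⟨inferInstance, ⇑(toral M), ⟨toral_prop M, toral_ergodic M hdet htr⟩, ?_⟩
  rintro T' ⟨hT', -⟩
  funext p
  obtain ⟨a, ha⟩ := QuotientAddGroup.mk_surjective p.1
  obtain ⟨b, hb⟩ := QuotientAddGroup.mk_surjective p.2
  have hp : p = ((a : UnitAddCircle), (b : UnitAddCircle)) := Prod.ext ha.symm hb.symm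
  have h1 := hT' ![a, b]
  have h2 := toral_prop M ![a, b]
  simp only [Matrix.cons_val_zero, Matrix.cons_val_one, Matrix.head_cons] at h1 h2
  rw [hp, h1, ← h2]
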